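/- Let n, k, r', l be positive integers and ε ∈ (0,1) with r' ≤ n/6 and l > max{9·log(n/ε) + 3·log(k/ε) + 6, 2r'}. Consider n − r' columns, where for each column c the set of its nonzero rows is the image of l independent draws, each uniformly distributed over {1,…,n}, with all draws independent across columns. Then with probability at least 1 − ε/k, for every nonempty subset T of these n − r' columns, the number of rows of {1,…,n} that are nonzero in at least one column of T is at least |T| + r'. -/

import Mathlib

open Real

section stmt8aux

set_option maxHeartbeats 800000

-- Zone 1, t = 1 : s = R, y ≥ 1 + c (since 6s ≤ n)
lemma zone1_t1 (N K E L R y c : ℝ) (hK : 0 ≤ K) (hE : 0 ≤ E) (hN : 0 ≤ N)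
    (hc : 0.69 ≤ c) (hc' : c ≤ 0.7)
    (hL : 9*N + 3*K + 12*E + 6 ≤ L) (hR : 1 ≤ R) (hRL : 2*R + 1 ≤ L)
    (hy : 1 + c ≤ y) :
    N + R*(1+y) - L*y ≤ -E - K - 2*c := by
  nlinarith [mul_nonneg (sub_nonneg.2 hy) (by linarith : (0:ℝ) ≤ L - 2*R - 1),
    mul_nonneg hK (by linarith : (0:ℝ) ≤ c), mul_nonneg hE (by linarith : (0:ℝ) ≤ c),
    mul_nonneg hN (by linarith : (0:ℝ) ≤ c)]

lemma zone1_t2 (N K E L R y t c : ℝ) (hK : 0 ≤ K) (hE : 0 ≤ E) (hN : 0 ≤ N)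
    (hc : 0.69 ≤ c) (hc' : c ≤ 0.7)
    (hL : 9*N + 3*K + 12*E + 6 ≤ L) (hR : 1 ≤ R) (hRL : 2*R + 1 ≤ L)
    (ht : 2 ≤ t) (hy : 1 ≤ y) :
    t*N + (t + R - 1)*(1+y) - L*t*y ≤ -E - K - (t+1)*c := by
  have hcoef : 0 ≤ (L-1)*(t-1/2) + 1 := by nlinarith
  have h2 : t + R - 1 - L*t ≤ -((L-1)*(t-1/2) + 1) := by nlinarith
  have h3 : (t+R-1)*(1+y) - L*t*y ≤ (t+R-1) - ((L-1)*(t-1/2) + 1) := by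
    nlinarith [mul_le_mul_of_nonneg_right h2 (by linarith : (0:ℝ) ≤ y),
      mul_nonneg hcoef (by linarith : (0:ℝ) ≤ y - 1)]
  have h4 : (t+R-1) - ((L-1)*(t-1/2) + 1) ≤ t - 2 - (L-1)*(t-1) := by nlinarith
  have h5 : t*N + t - 2 - (L-1)*(t-1) ≤ -E - K - (t+1)*c := by
    nlinarith [mul_nonneg (by linarith : (0:ℝ) ≤ L - 1 - (9*N+3*K+12*E+5)) (by linarith : (0:ℝ) ≤ t-1),
      mul_nonneg (by linarith : (0:ℝ) ≤ 9*N+3*K+12*E+5) (by linarith : (0:ℝ) ≤ (t-1) - t/2),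
      mul_nonneg hK (by linarith : (0:ℝ) ≤ 1.5*t - 1),
      mul_nonneg hE (by linarith : (0:ℝ) ≤ 6*t - 1),
      mul_nonneg hN (by linarith : (0:ℝ) ≤ 3.5*t)]
  linarith

lemma zone2 (N K E L R y t c : ℝ) (hK : 0 ≤ K) (hE : 0 ≤ E) (hN : 1.69 ≤ N)
    (hc : 0.69 ≤ c) (hc' : c ≤ 0.7)
    (hL : 9*N + 3*K + 12*E + 6 ≤ L) (hR : 1 ≤ R) (hRL : 2*R + 1 ≤ L)
    (ht : 1 ≤ t) (hy : c ≤ y) (hs2t : t + R - 1 ≤ 2*t) :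
    t*N + (t + R - 1)*(1+y) - L*t*y ≤ -E - K - (t+1)*c := by
  have hy0 : 0 ≤ y := by linarith
  have hb : E + K + c ≤ (L-2)*c - N - 2 - c := by
    nlinarith [mul_nonneg (by linarith : (0:ℝ) ≤ L - 2 - (9*N+3*K+12*E+4)) (by linarith : (0:ℝ) ≤ c),
      mul_nonneg hK (by linarith : (0:ℝ) ≤ 3*c - 1),
      mul_nonneg hE (by linarith : (0:ℝ) ≤ 12*c - 1),
      mul_nonneg (by linarith : (0:ℝ) ≤ N - 1.69) (by linarith : (0:ℝ) ≤ 9*c - 1)]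
  have h1 : (t+R-1)*(1+y) ≤ 2*t*(1+y) :=
    mul_le_mul_of_nonneg_right hs2t (by linarith)
  have h2 : 2*t*(1+y) - L*t*y ≤ 2*t - (L-2)*t*c := by
    nlinarith [mul_nonneg (mul_nonneg (by linarith : (0:ℝ) ≤ L-2) (by linarith : (0:ℝ) ≤ t)) (by linarith : (0:ℝ) ≤ y - c)]
  have h3 : t*N + 2*t - (L-2)*t*c ≤ -E - K - (t+1)*c := by
    nlinarith [mul_nonneg (by linarith : (0:ℝ) ≤ t - 1) (by linarith : (0:ℝ) ≤ (L-2)*c - N - 2 - c)]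
  linarith

-- Zone 3 : u ≥ 1, n ≤ 3t
lemma zone3 (N K E L u t nn c : ℝ) (hK : 0 ≤ K) (hE : 0 ≤ E) (hN : 1.69 ≤ N)
    (hc : 0.69 ≤ c) (hc' : c ≤ 0.7)
    (hL : 9*N + 3*K + 12*E + 6 ≤ L)
    (hu : 1 ≤ u) (hnn : 0 < nn) (ht : nn ≤ 3*t) (ht0 : 0 ≤ t) :
    (2*u - 1)*N - L*t*u/nn ≤ -E - K - (u+1)*c := by
  have hL0 : 0 ≤ L := by linarith
  have key : L*u/3 ≤ L*t*u/nn := by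
    rw [div_le_div_iff₀ (by norm_num) hnn]
    nlinarith [mul_nonneg (mul_nonneg hL0 (by linarith : (0:ℝ) ≤ u)) (by linarith : (0:ℝ) ≤ 3*t - nn)]
  have : (2*u - 1)*N - L*u/3 ≤ -E - K - (u+1)*c := by
    nlinarith [mul_nonneg (by linarith : (0:ℝ) ≤ u - 1) hK,
      mul_nonneg (by linarith : (0:ℝ) ≤ u - 1) hE,
      mul_nonneg (by linarith : (0:ℝ) ≤ u - 1) (by linarith : (0:ℝ) ≤ N),
      mul_nonneg (by linarith : (0:ℝ) ≤ u) (by linarith : (0:ℝ) ≤ N - 1.69)]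
  linarith

open Real

lemma pow_self_le_factorial_mul_exp (s : ℕ) : (s:ℝ)^s ≤ s.factorial * Real.exp s := by
  induction s with
  | zero => simp
  | succ k ih =>
    have hexp1 : (1:ℝ) ≤ Real.exp 1 := by
      have := Real.add_one_le_exp (1:ℝ); linarith
    have h1 : ((k:ℝ)+1)^k ≤ (k:ℝ)^k * Real.exp 1 := by
      rcases Nat.eq_zero_or_pos k with hk | hk
      · subst hk; simpa using hexp1
      · have hk0 : (0:ℝ) < k := by exact_mod_cast hk
        have heq : ((k:ℝ)+1)^k = (k:ℝ)^k * (1 + 1/(k:ℝ))^k := by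
          rw [← mul_pow]; congr 1; field_simp
        have h2 : (1 + 1/(k:ℝ))^k ≤ Real.exp 1 := by
          have hle : (1 + 1/(k:ℝ)) ≤ Real.exp (1/(k:ℝ)) := by
            have := Real.add_one_le_exp (1/(k:ℝ)); linarith
          calc (1 + 1/(k:ℝ))^k ≤ (Real.exp (1/(k:ℝ)))^k := by
                apply pow_le_pow_left₀ (by positivity) hle
            _ = Real.exp ((k:ℕ) * (1/(k:ℝ))) := by rw [Real.exp_nat_mul]
            _ = Real.exp 1 := by congr 1; field_simp
        rw [heq]
        exact mul_le_mul_of_nonneg_left h2 (by positivity)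
    have hkk : (0:ℝ) ≤ (k:ℝ)+1 := by positivity
    calc ((k+1:ℕ):ℝ)^(k+1) = ((k:ℝ)+1) * ((k:ℝ)+1)^k := by push_cast; ring
      _ ≤ ((k:ℝ)+1) * ((k:ℝ)^k * Real.exp 1) := by
          exact mul_le_mul_of_nonneg_left h1 hkk
      _ ≤ ((k:ℝ)+1) * ((k.factorial * Real.exp k) * Real.exp 1) := by
          apply mul_le_mul_of_nonneg_left _ hkk
          exact mul_le_mul_of_nonneg_right ih (Real.exp_pos 1).le
      _ = (k+1).factorial * Real.exp ((k:ℝ)+1) := by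
          rw [Nat.factorial_succ, Real.exp_add]; push_cast; ring
      _ = (k+1).factorial * Real.exp ((k+1:ℕ):ℝ) := by push_cast; ring_nf

lemma choose_mul_le (n s : ℕ) : (n.choose s : ℝ) * (s:ℝ)^s ≤ (n:ℝ)^s * Real.exp s := by
  have h1 : (n.choose s : ℝ) * s.factorial ≤ (n:ℝ)^s := by
    have := Nat.descFactorial_le_pow n s
    rw [Nat.descFactorial_eq_factorial_mul_choose] at this
    calc (n.choose s : ℝ) * s.factorial = ((s.factorial * n.choose s : ℕ) : ℝ) := by push_cast; ring
      _ ≤ ((n^s : ℕ) : ℝ) := by exact_mod_cast this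
      _ = (n:ℝ)^s := by push_cast; ring
  calc (n.choose s : ℝ) * (s:ℝ)^s ≤ (n.choose s : ℝ) * (s.factorial * Real.exp s) := by
        apply mul_le_mul_of_nonneg_left (pow_self_le_factorial_mul_exp s) (by positivity)
    _ = ((n.choose s : ℝ) * s.factorial) * Real.exp s := by ring
    _ ≤ (n:ℝ)^s * Real.exp s := mul_le_mul_of_nonneg_right h1 (Real.exp_pos s).le

lemma cardA (m l n : ℕ) (T : Finset (Fin m)) (S : Finset (Fin n)) :
    (Finset.univ.filter
      (fun ω : Fin m → Fin l → Fin n => ∀ c ∈ T, ∀ i, ω c i ∈ S)).card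
      = S.card ^ (l * T.card) * n ^ (l * (m - T.card)) := by
  have heq : Finset.univ.filter
      (fun ω : Fin m → Fin l → Fin n => ∀ c ∈ T, ∀ i, ω c i ∈ S)
      = Fintype.piFinset (fun c => Fintype.piFinset
          (fun _ : Fin l => if c ∈ T then S else Finset.univ)) := by
    ext ω
    simp only [Finset.mem_filter, Finset.mem_univ, true_and, Fintype.mem_piFinset]
    constructor
    · intro h c i
      by_cases hc : c ∈ T
      · simp [hc, h c hc i]
      · simp [hc]
    · intro h c hc i
      have := h c i
      simpa [hc] using this
  rw [heq, Fintype.card_piFinset]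
  have : ∀ c : Fin m, (Fintype.piFinset
      (fun _ : Fin l => if c ∈ T then S else Finset.univ)).card
      = (if c ∈ T then S.card else n) ^ l := by
    intro c
    rw [Fintype.card_piFinset]
    by_cases hc : c ∈ T <;> simp [hc, Finset.prod_const]
  rw [Finset.prod_congr rfl (fun c _ => this c)]
  rw [← Finset.prod_sdiff (Finset.subset_univ T)]
  have h1 : ∏ c ∈ T, (if c ∈ T then S.card else n) ^ l = (S.card ^ l) ^ T.card := by
    rw [Finset.prod_congr rfl (fun c hc => by rw [if_pos hc]), Finset.prod_const]
  have h2 : ∏ c ∈ Finset.univ \ T, (if c ∈ T then S.card else n) ^ l = (n ^ l) ^ (m - T.card) := by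
    rw [Finset.prod_congr rfl (fun c hc => by
      rw [if_neg (Finset.mem_sdiff.mp hc).2]), Finset.prod_const,
      Finset.card_sdiff_of_subset (Finset.subset_univ T)]
    simp
  rw [h1, h2, ← pow_mul, ← pow_mul, mul_comm l, mul_comm l, mul_comm]

lemma geom_half (m : ℕ) : ∑ t ∈ Finset.Icc 1 m, ((1:ℝ)/2)^t = 1 - (1/2)^m := by
  induction m with
  | zero => simp
  | succ p ih =>
    rw [Finset.sum_Icc_succ_top (by omega), ih]
    ring

lemma geom_half_rev (m : ℕ) : ∑ t ∈ Finset.Icc 1 m, ((1:ℝ)/2)^(m - t + 1) = 1 - (1/2)^m := by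
  rw [← geom_half m]
  apply Finset.sum_nbij' (fun t => m + 1 - t) (fun t => m + 1 - t)
  · intro a ha; simp only [Finset.mem_Icc] at *; omega
  · intro a ha; simp only [Finset.mem_Icc] at *; omega
  · intro a ha; simp only [Finset.mem_Icc] at ha; omega
  · intro a ha; simp only [Finset.mem_Icc] at ha; omega
  · intro a ha
    simp only [Finset.mem_Icc] at ha
    congr 1
    omega

section helpers
lemma exp_target (ε : ℝ) (k : ℕ) (hε : 0 < ε) (hk : 0 < k) (j : ℕ) :
    Real.exp (-(-Real.log ε) - Real.log k - ((j:ℝ)+1)*Real.log 2) = ε/(2*k)*((1:ℝ)/2)^j := by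
  have hkR : (0:ℝ) < k := by exact_mod_cast hk
  have h2 : Real.exp (((j:ℝ)+1)*Real.log 2) = 2^(j+1) := by
    rw [show ((j:ℝ)+1) = ((j+1 : ℕ):ℝ) by push_cast; ring, Real.exp_nat_mul,
      Real.exp_log (by norm_num : (0:ℝ) < 2)]
  rw [neg_neg, sub_sub, Real.exp_sub, Real.exp_log hε, Real.exp_add, h2,
    Real.exp_log hkR]
  rw [pow_succ]
  field_simp
  rw [← mul_pow]; norm_num
end helpers

lemma per_t (n k r' l m t : ℕ) (ε : ℝ) (hε0 : 0 < ε) (hε1 : ε ≤ 1) (hk : 0 < k)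
    (hr'1 : 1 ≤ r') (h6r : 6*r' ≤ n) (hmr : m + r' = n) (hl2r : 2*r' + 1 ≤ l)
    (hlL : 9*(Real.log n - Real.log ε) + 3*(Real.log k - Real.log ε) + 6 ≤ (l:ℝ))
    (ht1 : 1 ≤ t) (htm : t ≤ m) :
    (m.choose t : ℝ) * (n.choose (t+r'-1)) * ((t+r'-1 : ℕ):ℝ)^(l*t)
      ≤ ε/(2*k) * (((1:ℝ)/2)^t + ((1:ℝ)/2)^(m-t+1)) * (n:ℝ)^(l*t) := by
  set s : ℕ := t + r' - 1 with hsdef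
  have hn1 : 1 ≤ n := by omega
  have hs1 : 1 ≤ s := by omega
  have hstr : s + 1 = t + r' := by omega
  have hsn : s + 1 ≤ n := by omega
  have hnR : (0:ℝ) < n := by exact_mod_cast by omega
  have hsR : (0:ℝ) < s := by exact_mod_cast hs1
  have hkR : (0:ℝ) < k := by exact_mod_cast hk
  -- log facts
  have hc1 : 0.69 ≤ Real.log 2 := by
    have := Real.log_two_gt_d9; norm_num at this ⊢; linarith
  have hc2 : Real.log 2 ≤ 0.7 := by
    have := Real.log_two_lt_d9; norm_num at this ⊢; linarith
  have hlog3 : (1:ℝ) ≤ Real.log 3 := by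
    rw [Real.le_log_iff_exp_le (by norm_num : (0:ℝ) < 3)]
    have := Real.exp_one_lt_d9; norm_num at this ⊢; linarith
  have hK : 0 ≤ Real.log k := Real.log_nonneg (by exact_mod_cast hk)
  have hE : 0 ≤ -Real.log ε := by
    have := Real.log_nonpos (le_of_lt hε0) hε1; linarith
  have hlog6 : Real.log 6 = Real.log 2 + Real.log 3 := by
    rw [← Real.log_mul (by norm_num) (by norm_num)]; norm_num
  have hN6 : Real.log 6 ≤ Real.log n := by
    apply Real.log_le_log (by norm_num)
    exact_mod_cast (by omega : 6 ≤ n)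
  have hN : 1.69 ≤ Real.log n := by rw [hlog6] at hN6; linarith
  have hL : 9*Real.log n + 3*Real.log k + 12*(-Real.log ε) + 6 ≤ (l:ℝ) := by linarith
  have hl2rR : 2*(r':ℝ) + 1 ≤ (l:ℝ) := by exact_mod_cast hl2r
  have hr'R : (1:ℝ) ≤ (r':ℝ) := by exact_mod_cast hr'1
  have htR : (1:ℝ) ≤ (t:ℝ) := by exact_mod_cast ht1
  have hscast : ((s:ℕ):ℝ) = (t:ℝ) + (r':ℝ) - 1 := by
    have : ((s:ℕ):ℝ) + 1 = (t:ℝ) + (r':ℝ) := by exact_mod_cast hstr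
    linarith
  set N := Real.log n with hNdef
  set K := Real.log k with hKdef
  set E := -Real.log ε with hEdef
  set c := Real.log 2 with hcdef
  set y := Real.log n - Real.log s with hydef
  have hexp_n : ∀ p : ℕ, (n:ℝ)^p = Real.exp (p * N) := by
    intro p; rw [Real.exp_nat_mul, Real.exp_log hnR]
  have hexp_s : ((s:ℕ):ℝ)^(l*t) = Real.exp ((l*t : ℕ) * (N - y)) := by
    have h : N - y = Real.log s := by rw [hydef]; ring
    rw [h, Real.exp_nat_mul, Real.exp_log hsR]
  have hltcast : ((l*t : ℕ):ℝ) = (l:ℝ)*(t:ℝ) := by push_cast; ring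
  have hC1 : (m.choose t : ℝ) ≤ Real.exp (t * N) := by
    calc (m.choose t:ℝ) ≤ ((n^t : ℕ):ℝ) := by
          have h1 : m.choose t ≤ m ^ t := Nat.choose_le_pow m t
          have h2 : m ^ t ≤ n ^ t := Nat.pow_le_pow_left (by omega) t
          exact_mod_cast le_trans h1 h2
      _ = Real.exp (t*N) := by push_cast; exact hexp_n t
  by_cases hz3 : n < 2*s
  · -- zone 3
    set u : ℕ := n - s with hudef
    have hu1 : 1 ≤ u := by omega
    have hun : u + s = n := by omega
    have hmt : m - t + 1 = u := by omega
    have hmtu : m - t = u - 1 := by omega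
    have h3t : n ≤ 3*t := by omega
    have hucast : ((u:ℕ):ℝ) = (n:ℝ) - (s:ℝ) := by
      have : ((u:ℕ):ℝ) + (s:ℝ) = (n:ℝ) := by exact_mod_cast hun
      linarith
    have hC1' : (m.choose t : ℝ) ≤ Real.exp ((u-1 : ℕ) * N) := by
      rw [← Nat.choose_symm htm, hmtu]
      calc ((m.choose (u-1)):ℝ) ≤ ((n^(u-1) : ℕ):ℝ) := by
            have h1 : m.choose (u-1) ≤ m ^ (u-1) := Nat.choose_le_pow m (u-1)
            have h2 : m ^ (u-1) ≤ n ^ (u-1) := Nat.pow_le_pow_left (by omega) _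
            exact_mod_cast le_trans h1 h2
        _ = Real.exp ((u-1:ℕ)*N) := by push_cast; exact hexp_n (u-1)
    have hC2' : (n.choose s : ℝ) ≤ Real.exp (u * N) := by
      have hsymm : n.choose s = n.choose u := by
        rw [hudef, Nat.choose_symm (by omega : s ≤ n)]
      rw [hsymm]
      calc ((n.choose u):ℝ) ≤ ((n^u : ℕ):ℝ) := by exact_mod_cast Nat.choose_le_pow n u
        _ = Real.exp (u*N) := by push_cast; exact hexp_n u
    have hsb : ((s:ℕ):ℝ)^(l*t) ≤ (n:ℝ)^(l*t) * Real.exp (-((l:ℝ)*t*u/n)) := by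
      have hbase : ((s:ℕ):ℝ) ≤ (n:ℝ) * Real.exp (-((u:ℝ)/n)) := by
        have h1 : -((u:ℝ)/n) + 1 ≤ Real.exp (-((u:ℝ)/n)) := Real.add_one_le_exp _
        have h2 : ((s:ℕ):ℝ) = (n:ℝ) * (1 - (u:ℝ)/n) := by
          field_simp [hucast]
          linarith
        rw [h2]
        apply mul_le_mul_of_nonneg_left (by linarith) (le_of_lt hnR)
      calc ((s:ℕ):ℝ)^(l*t) ≤ ((n:ℝ) * Real.exp (-((u:ℝ)/n)))^(l*t) := by
            apply pow_le_pow_left₀ (by positivity) hbase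
        _ = (n:ℝ)^(l*t) * Real.exp (-((u:ℝ)/n))^(l*t) := mul_pow _ _ _
        _ = (n:ℝ)^(l*t) * Real.exp ((l*t:ℕ) * -((u:ℝ)/n)) := by rw [Real.exp_nat_mul]
        _ = (n:ℝ)^(l*t) * Real.exp (-((l:ℝ)*t*u/n)) := by rw [hltcast]; ring_nf
    have hkey : ((u:ℝ)-1)*N + (u:ℝ)*N + -((l:ℝ)*t*u/n) ≤ -E - K - ((u:ℝ)+1)*c := by
      have := zone3 N K E (l:ℝ) (u:ℝ) (t:ℝ) (n:ℝ) c hK hE hN hc1 hc2 hL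
        (by exact_mod_cast hu1) hnR (by exact_mod_cast h3t) (by positivity)
      linarith
    have hu1cast : ((u-1 : ℕ):ℝ) = (u:ℝ) - 1 := by
      have : ((u-1:ℕ):ℝ) + 1 = (u:ℝ) := by exact_mod_cast (by omega : (u-1) + 1 = u)
      linarith
    calc (m.choose t : ℝ) * (n.choose s) * ((s:ℕ):ℝ)^(l*t)
        ≤ Real.exp ((u-1:ℕ) * N) * Real.exp (u * N) * ((n:ℝ)^(l*t) * Real.exp (-((l:ℝ)*t*u/n))) := by
          apply mul_le_mul (mul_le_mul hC1' hC2' (by positivity) (by positivity)) hsb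
            (by positivity) (by positivity)
      _ = Real.exp (((u:ℝ)-1)*N + (u:ℝ)*N + -((l:ℝ)*t*u/n)) * (n:ℝ)^(l*t) := by
          rw [hu1cast, mul_comm ((n:ℝ)^(l*t)) (Real.exp (-((l:ℝ)*t*u/n))), ← mul_assoc,
            ← Real.exp_add, ← Real.exp_add]
      _ ≤ Real.exp (-E - K - ((u:ℝ)+1)*c) * (n:ℝ)^(l*t) := by
          apply mul_le_mul_of_nonneg_right (Real.exp_le_exp.2 hkey) (by positivity)
      _ = ε/(2*k) * ((1:ℝ)/2)^(m-t+1) * (n:ℝ)^(l*t) := by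
          have e1 : Real.exp (-E - K - ((u:ℝ)+1)*c) = ε/(2*k)*((1:ℝ)/2)^u := by
            rw [hEdef, hKdef, hcdef]; exact exp_target ε k hε0 hk u
          rw [e1, hmt]
      _ ≤ ε/(2*k) * (((1:ℝ)/2)^t + ((1:ℝ)/2)^(m-t+1)) * (n:ℝ)^(l*t) := by
          apply mul_le_mul_of_nonneg_right _ (by positivity)
          apply mul_le_mul_of_nonneg_left _ (by positivity)
          exact le_add_of_nonneg_left (by positivity)
  · -- zones 1 and 2
    push_neg at hz3
    have hC2 : (n.choose s : ℝ) ≤ Real.exp (((s:ℕ):ℝ)*(1+y)) := by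
      have h := choose_mul_le n s
      have hpos : (0:ℝ) < ((s:ℕ):ℝ)^s := by positivity
      have heq : Real.exp (((s:ℕ):ℝ)*(1+y)) * ((s:ℕ):ℝ)^s = (n:ℝ)^s * Real.exp s := by
        have h1 : ((s:ℕ):ℝ)^s = Real.exp (s * Real.log s) := by
          rw [Real.exp_nat_mul, Real.exp_log hsR]
        have h2 : (n:ℝ)^s = Real.exp (s * N) := hexp_n s
        rw [h1, h2, ← Real.exp_add, ← Real.exp_add]
        congr 1
        rw [hydef]; ring
      have h' : (n.choose s : ℝ) * ((s:ℕ):ℝ)^s ≤ Real.exp (((s:ℕ):ℝ)*(1+y)) * ((s:ℕ):ℝ)^s := by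
        rw [heq]; exact h
      exact le_of_mul_le_mul_right h' hpos
    have hkey : (t:ℝ)*N + ((s:ℕ):ℝ)*(1+y) - (l:ℝ)*t*y ≤ -E - K - ((t:ℝ)+1)*c := by
      by_cases hz1 : 3*s ≤ n
      · -- zone 1
        have hy3 : Real.log 3 ≤ y := by
          have h1 : Real.log (3*s) ≤ Real.log n :=
            Real.log_le_log (by positivity) (by exact_mod_cast hz1)
          rw [Real.log_mul (by norm_num) (ne_of_gt hsR)] at h1
          rw [hydef]; linarith
        rcases eq_or_lt_of_le ht1 with h1 | h2
        · -- t = 1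
          have hsr' : s = r' := by omega
          have hy6 : 1 + c ≤ y := by
            have h6s : ((6*s : ℕ):ℝ) ≤ (n:ℝ) := by exact_mod_cast (by omega : 6*s ≤ n)
            have h1 : Real.log (6*(s:ℝ)) ≤ Real.log n :=
              Real.log_le_log (by positivity) (by push_cast at h6s ⊢; linarith)
            rw [Real.log_mul (by norm_num) (ne_of_gt hsR), hlog6] at h1
            rw [hydef]; linarith
          have hz := zone1_t1 N K E (l:ℝ) (r':ℝ) y c hK hE (by linarith) hc1 hc2 hL hr'R hl2rR hy6
          have ht1' : (t:ℝ) = 1 := by exact_mod_cast h1.symm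
          rw [ht1', hscast, ht1']
          calc 1*N + ((1:ℝ) + (r':ℝ) - 1)*(1+y) - (l:ℝ)*1*y
              = N + (r':ℝ)*(1+y) - (l:ℝ)*y := by ring
            _ ≤ -E - K - 2*c := hz
            _ = -E - K - ((1:ℝ)+1)*c := by ring
        · -- t ≥ 2
          have ht2 : (2:ℝ) ≤ (t:ℝ) := by exact_mod_cast h2
          have hz := zone1_t2 N K E (l:ℝ) (r':ℝ) y (t:ℝ) c hK hE (by linarith) hc1 hc2 hL
            hr'R hl2rR ht2 (by linarith)
          rw [hscast]; linarith
      · -- zone 2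
        push_neg at hz1
        have hyc : c ≤ y := by
          have h1 : Real.log (2*(s:ℝ)) ≤ Real.log n := by
            apply Real.log_le_log (by positivity)
            exact_mod_cast hz3
          rw [Real.log_mul (by norm_num) (ne_of_gt hsR)] at h1
          rw [hydef]; linarith
        have hs2t : ((s:ℕ):ℝ) ≤ 2*(t:ℝ) := by
          have : s ≤ 2*t := by omega
          exact_mod_cast this
        have hz := zone2 N K E (l:ℝ) (r':ℝ) y (t:ℝ) c hK hE hN hc1 hc2 hL hr'R hl2rR htR hyc
          (by rw [← hscast]; exact hs2t)
        rw [hscast]; linarith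
    calc (m.choose t : ℝ) * (n.choose s) * ((s:ℕ):ℝ)^(l*t)
        ≤ Real.exp (t * N) * Real.exp (((s:ℕ):ℝ)*(1+y)) * Real.exp ((l*t:ℕ) * (N - y)) := by
          rw [hexp_s]
          apply mul_le_mul_of_nonneg_right (mul_le_mul hC1 hC2 (by positivity) (by positivity))
            (by positivity)
      _ = Real.exp ((t:ℝ)*N + ((s:ℕ):ℝ)*(1+y) - (l:ℝ)*t*y + (l:ℝ)*t*N) := by
          rw [← Real.exp_add, ← Real.exp_add, hltcast]
          congr 1
          ring
      _ ≤ Real.exp (-E - K - ((t:ℝ)+1)*c + (l:ℝ)*t*N) := by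
          apply Real.exp_le_exp.2; linarith
      _ = ε/(2*k) * ((1:ℝ)/2)^t * (n:ℝ)^(l*t) := by
          rw [Real.exp_add]
          have e1 : Real.exp (-E - K - ((t:ℝ)+1)*c) = ε/(2*k)*((1:ℝ)/2)^t := by
            rw [hEdef, hKdef, hcdef]; exact exp_target ε k hε0 hk t
          have e2 : Real.exp ((l:ℝ)*(t:ℝ)*N) = (n:ℝ)^(l*t) := by
            rw [← hltcast, ← hexp_n]
          rw [e1, e2]
      _ ≤ ε/(2*k) * (((1:ℝ)/2)^t + ((1:ℝ)/2)^(m-t+1)) * (n:ℝ)^(l*t) := by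
          apply mul_le_mul_of_nonneg_right _ (by positivity)
          apply mul_le_mul_of_nonneg_left _ (by positivity)
          exact le_add_of_nonneg_right (by positivity)

end stmt8aux

/-- Lemma 8: consider `n − r'` columns, where the set of nonzero rows of column `c` is
the image of `l` i.i.d. draws uniform on `{1,…,n}`, independently across columns
(modelled by the uniform counting probability on the outcome space
`Fin (n-r') → Fin l → Fin n`). If `r' ≤ n/6` and
`l > max{9 log(n/ε) + 3 log(k/ε) + 6, 2r'}`, then with probability at least `1 − ε/k`
every nonempty subfamily `T` of columns has at least `|T| + r'` distinct nonzero rows. -/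
theorem stmt8 (n k r' l : ℕ) (hn : 0 < n) (hk : 0 < k) (hr'0 : 0 < r') (hl0 : 0 < l)
    (ε : ℝ) (hε0 : 0 < ε) (hε1 : ε < 1)
    (hr'n : (r' : ℝ) ≤ (n : ℝ) / 6)
    (hlb : (l : ℝ) > max (9 * Real.log (n / ε) + 3 * Real.log (k / ε) + 6) (2 * r')) :
    1 - ε / k ≤
      (Nat.card {ω : Fin (n - r') → Fin l → Fin n //
          ∀ T : Finset (Fin (n - r')), T.Nonempty →
            T.card + r' ≤ (T.biUnion (fun c => Finset.univ.image (ω c))).card} : ℝ) /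
        (Fintype.card (Fin (n - r') → Fin l → Fin n) : ℝ) := by
  classical
  set m := n - r' with hmdef
  -- basic numeric facts
  have h6r : 6 * r' ≤ n := by
    have : (6:ℝ) * r' ≤ n := by linarith
    exact_mod_cast this
  have hmr : m + r' = n := by omega
  have hl2r : 2 * r' + 1 ≤ l := by
    have h1 : (2:ℝ) * r' < l := lt_of_le_of_lt (le_max_right _ _) hlb
    have : ((2 * r' : ℕ):ℝ) < (l:ℝ) := by push_cast; linarith
    exact_mod_cast this
  have hlL : 9*(Real.log n - Real.log ε) + 3*(Real.log k - Real.log ε) + 6 ≤ (l:ℝ) := by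
    have h1 := lt_of_le_of_lt (le_max_left _ _) hlb
    rw [Real.log_div (by positivity) (ne_of_gt hε0),
        Real.log_div (by positivity) (ne_of_gt hε0)] at h1
    · linarith
  have hkR : (0:ℝ) < k := by exact_mod_cast hk
  set P : (Fin m → Fin l → Fin n) → Prop := fun ω =>
    ∀ T : Finset (Fin m), T.Nonempty →
      T.card + r' ≤ (T.biUnion (fun c => Finset.univ.image (ω c))).card with hPdef
  have hΩ : Fintype.card (Fin m → Fin l → Fin n) = n ^ (l * m) := by
    rw [Fintype.card_fun, Fintype.card_fun]
    simp [Fintype.card_fin, ← pow_mul, mul_comm]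
  have hNpos : (0:ℝ) < (n:ℝ) ^ (l * m) := by positivity
  -- reduce to bad-set bound
  have hcards : (Finset.univ.filter P).card + (Finset.univ.filter (fun ω => ¬ P ω)).card
      = n ^ (l * m) := by
    rw [Finset.card_filter_add_card_filter_not, Finset.card_univ, hΩ]
  have hmain : ((Finset.univ.filter (fun ω => ¬ P ω)).card : ℝ) ≤ ε / k * (n:ℝ) ^ (l * m) := by
    have hsub : Finset.univ.filter (fun ω => ¬ P ω) ⊆
        (Finset.Icc 1 m).biUnion (fun t =>
          (Finset.univ.powersetCard t).biUnion (fun T =>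
            (Finset.univ.powersetCard (t + r' - 1)).biUnion (fun S =>
              Finset.univ.filter (fun ω : Fin m → Fin l → Fin n =>
                ∀ c ∈ T, ∀ i, ω c i ∈ S)))) := by
      intro ω hω
      simp only [Finset.mem_filter, Finset.mem_univ, true_and, hPdef] at hω
      push_neg at hω
      obtain ⟨T, hTne, hTlt⟩ := hω
      have ht1 : 1 ≤ T.card := Finset.Nonempty.card_pos hTne
      have htm : T.card ≤ m := by
        have := Finset.card_le_univ T
        simpa using this
      have hUcard : (T.biUnion fun c => Finset.univ.image (ω c)).card ≤ T.card + r' - 1 := by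
        omega
      obtain ⟨S, hUS, hScard⟩ := Finset.exists_superset_card_eq hUcard
        (by simp only [Fintype.card_fin]; omega)
      apply Finset.mem_biUnion.2
      refine ⟨T.card, Finset.mem_Icc.2 ⟨ht1, htm⟩, ?_⟩
      apply Finset.mem_biUnion.2
      refine ⟨T, by simp [Finset.mem_powersetCard_univ], ?_⟩
      apply Finset.mem_biUnion.2
      refine ⟨S, by simp [Finset.mem_powersetCard_univ, hScard], ?_⟩
      simp only [Finset.mem_filter, Finset.mem_univ, true_and]
      intro c hc i
      exact hUS (Finset.mem_biUnion.2 ⟨c, hc, Finset.mem_image_of_mem _ (Finset.mem_univ i)⟩)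
    have hB1 : (Finset.univ.filter (fun ω => ¬ P ω)).card
        ≤ ∑ t ∈ Finset.Icc 1 m,
            m.choose t * (n.choose (t+r'-1) * ((t+r'-1)^(l*t) * n^(l*(m-t)))) := by
      calc (Finset.univ.filter (fun ω => ¬ P ω)).card
          ≤ ((Finset.Icc 1 m).biUnion _).card := Finset.card_le_card hsub
        _ ≤ ∑ t ∈ Finset.Icc 1 m, ((Finset.univ.powersetCard t).biUnion _).card :=
            Finset.card_biUnion_le
        _ ≤ ∑ t ∈ Finset.Icc 1 m, ∑ T ∈ Finset.univ.powersetCard t,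
              ((Finset.univ.powersetCard (t + r' - 1)).biUnion _).card :=
            Finset.sum_le_sum fun t _ => Finset.card_biUnion_le
        _ ≤ ∑ t ∈ Finset.Icc 1 m, ∑ T ∈ Finset.univ.powersetCard t,
              ∑ S ∈ Finset.univ.powersetCard (t + r' - 1),
              (Finset.univ.filter (fun ω : Fin m → Fin l → Fin n =>
                ∀ c ∈ T, ∀ i, ω c i ∈ S)).card :=
            Finset.sum_le_sum fun t _ => Finset.sum_le_sum fun T _ => Finset.card_biUnion_le
        _ = ∑ t ∈ Finset.Icc 1 m,
              m.choose t * (n.choose (t+r'-1) * ((t+r'-1)^(l*t) * n^(l*(m-t)))) := by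
            apply Finset.sum_congr rfl
            intro t ht
            have hin : ∀ T ∈ Finset.univ.powersetCard t,
                (∑ S ∈ Finset.univ.powersetCard (t + r' - 1),
                  (Finset.univ.filter (fun ω : Fin m → Fin l → Fin n =>
                    ∀ c ∈ T, ∀ i, ω c i ∈ S)).card)
                = n.choose (t+r'-1) * ((t+r'-1)^(l*t) * n^(l*(m-t))) := by
              intro T hT
              have hTc : T.card = t := (Finset.mem_powersetCard_univ.1 hT)
              have : ∀ S ∈ Finset.univ.powersetCard (t + r' - 1),
                  (Finset.univ.filter (fun ω : Fin m → Fin l → Fin n =>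
                    ∀ c ∈ T, ∀ i, ω c i ∈ S)).card
                  = (t+r'-1)^(l*t) * n^(l*(m-t)) := by
                intro S hS
                have hSc : S.card = t + r' - 1 := (Finset.mem_powersetCard_univ.1 hS)
                rw [cardA, hSc, hTc]
              rw [Finset.sum_congr rfl this, Finset.sum_const, Finset.card_powersetCard,
                Finset.card_univ, Fintype.card_fin, smul_eq_mul]
            rw [Finset.sum_congr rfl hin, Finset.sum_const, Finset.card_powersetCard,
              Finset.card_univ, Fintype.card_fin, smul_eq_mul]
    have hB2 : ((Finset.univ.filter (fun ω => ¬ P ω)).card : ℝ)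
        ≤ ∑ t ∈ Finset.Icc 1 m, ((m.choose t : ℝ) * (n.choose (t+r'-1))
            * ((t+r'-1 : ℕ):ℝ)^(l*t) * (n:ℝ)^(l*(m-t))) := by
      calc ((Finset.univ.filter (fun ω => ¬ P ω)).card : ℝ)
          ≤ ((∑ t ∈ Finset.Icc 1 m,
              m.choose t * (n.choose (t+r'-1) * ((t+r'-1)^(l*t) * n^(l*(m-t)))) : ℕ) : ℝ) := by
            exact_mod_cast hB1
        _ = ∑ t ∈ Finset.Icc 1 m, ((m.choose t : ℝ) * (n.choose (t+r'-1))
            * ((t+r'-1 : ℕ):ℝ)^(l*t) * (n:ℝ)^(l*(m-t))) := by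
            push_cast
            apply Finset.sum_congr rfl
            intro t ht
            ring
    have hB3 : ∑ t ∈ Finset.Icc 1 m, ((m.choose t : ℝ) * (n.choose (t+r'-1))
            * ((t+r'-1 : ℕ):ℝ)^(l*t) * (n:ℝ)^(l*(m-t)))
        ≤ ∑ t ∈ Finset.Icc 1 m,
            ε/(2*k) * (((1:ℝ)/2)^t + ((1:ℝ)/2)^(m-t+1)) * (n:ℝ)^(l*m) := by
      apply Finset.sum_le_sum
      intro t ht
      have ht1 : 1 ≤ t := (Finset.mem_Icc.1 ht).1
      have htm : t ≤ m := (Finset.mem_Icc.1 ht).2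
      have hp := per_t n k r' l m t ε hε0 (le_of_lt hε1) hk (by omega) h6r hmr hl2r hlL ht1 htm
      have hpowsplit : (n:ℝ)^(l*t) * (n:ℝ)^(l*(m-t)) = (n:ℝ)^(l*m) := by
        rw [← pow_add]
        congr 1
        have : l*t + l*(m-t) = l*m := by
          have : t + (m - t) = m := by omega
          calc l*t + l*(m-t) = l*(t + (m-t)) := by ring
            _ = l*m := by rw [this]
        exact this
      calc (m.choose t : ℝ) * (n.choose (t+r'-1)) * ((t+r'-1 : ℕ):ℝ)^(l*t) * (n:ℝ)^(l*(m-t))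
          ≤ (ε/(2*k) * (((1:ℝ)/2)^t + ((1:ℝ)/2)^(m-t+1)) * (n:ℝ)^(l*t)) * (n:ℝ)^(l*(m-t)) := by
            apply mul_le_mul_of_nonneg_right hp (by positivity)
        _ = ε/(2*k) * (((1:ℝ)/2)^t + ((1:ℝ)/2)^(m-t+1)) * (n:ℝ)^(l*m) := by
            rw [mul_assoc, hpowsplit]
    have hB4 : ∑ t ∈ Finset.Icc 1 m,
            ε/(2*k) * (((1:ℝ)/2)^t + ((1:ℝ)/2)^(m-t+1)) * (n:ℝ)^(l*m)
        ≤ ε / k * (n:ℝ) ^ (l * m) := by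
      have hsum : ∑ t ∈ Finset.Icc 1 m, (((1:ℝ)/2)^t + ((1:ℝ)/2)^(m-t+1))
          = 2 - 2*((1:ℝ)/2)^m := by
        rw [Finset.sum_add_distrib, geom_half, geom_half_rev]
        ring
      calc ∑ t ∈ Finset.Icc 1 m,
            ε/(2*k) * (((1:ℝ)/2)^t + ((1:ℝ)/2)^(m-t+1)) * (n:ℝ)^(l*m)
          = ε/(2*k) * (2 - 2*((1:ℝ)/2)^m) * (n:ℝ)^(l*m) := by
            rw [← Finset.sum_mul, ← Finset.mul_sum, hsum]
        _ ≤ ε / k * (n:ℝ) ^ (l * m) := by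
            have hq : (0:ℝ) < ((1:ℝ)/2)^m := by positivity
            have : ε/(2*k) * (2 - 2*((1:ℝ)/2)^m) ≤ ε / k := by
              rw [div_mul_eq_mul_div, div_le_div_iff₀ (by positivity) (by positivity)]
              nlinarith [mul_pos (mul_pos hε0 hq) hkR]
            apply mul_le_mul_of_nonneg_right this (by positivity)
    linarith
  -- final arithmetic
  have hgood : (Nat.card {ω : Fin m → Fin l → Fin n // P ω} : ℝ)
      = ((Finset.univ.filter P).card : ℝ) := by
    rw [Nat.card_eq_fintype_card, Fintype.card_subtype]
  rw [hgood, hΩ]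
  push_cast
  rw [le_div_iff₀ hNpos]
  have hc : ((Finset.univ.filter P).card : ℝ)
      = (n:ℝ) ^ (l * m) - ((Finset.univ.filter (fun ω => ¬ P ω)).card : ℝ) := by
    have := hcards
    have : (((Finset.univ.filter P).card : ℕ) : ℝ)
        + (((Finset.univ.filter (fun ω => ¬ P ω)).card : ℕ) : ℝ) = ((n ^ (l*m) : ℕ) : ℝ) := by
      exact_mod_cast congrArg (Nat.cast : ℕ → ℝ) this
    push_cast at this
    linarith
  rw [hc]
  nlinarith [hNpos, hmain]
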